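/- Let a > 0, b ≥ 0, d > 0, κ > 1 be real numbers such that a > (2b/d)^{1/κ}. If for some T > 0 a nonnegative continuous function y : [0, T) → ℝ satisfies y(t) ≥ a − b·t + d·∫₀ᵗ y(s)^κ ds for all t ∈ (0, T), then T ≤ 2 / ((κ − 1)·a^{κ−1}·d). -/

import Mathlib

open MeasureTheory Set

theorem stmt0 (a b d κ : ℝ) (ha : 0 < a) (hb : 0 ≤ b) (hd : 0 < d) (hκ : 1 < κ)
    (hcond : a > (2 * b / d) ^ (1 / κ)) (T : ℝ) (hT : 0 < T) (y : ℝ → ℝ)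
    (hycont : ContinuousOn y (Ico 0 T)) (hynonneg : ∀ t ∈ Ico (0:ℝ) T, 0 ≤ y t)
    (hineq : ∀ t ∈ Ioo (0:ℝ) T, y t ≥ a - b * t + d * ∫ s in (0:ℝ)..t, (y s) ^ κ) :
    T ≤ 2 / ((κ - 1) * a ^ (κ - 1) * d) := by
  have hκ0 : (0:ℝ) < κ := by linarith
  set c : ℝ := (2 * b / d) ^ (1 / κ) with hc_def
  have hbd : 0 ≤ 2 * b / d := by positivity
  have hcκ : c ^ κ = 2 * b / d := by
    rw [hc_def, ← Real.rpow_mul hbd, one_div, inv_mul_cancel₀ (ne_of_gt hκ0), Real.rpow_one]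
  have hc0 : 0 ≤ c := Real.rpow_nonneg hbd _
  set g : ℝ → ℝ := fun s => y s ^ κ with hg_def
  have hgcont : ContinuousOn g (Ico 0 T) :=
    hycont.rpow_const (fun x hx => Or.inr hκ0.le)
  have hgint : ∀ t ∈ Ico (0:ℝ) T, IntervalIntegrable g volume 0 t := by
    intro t ht
    apply ContinuousOn.intervalIntegrable
    apply hgcont.mono
    rw [uIcc_of_le ht.1]
    exact Icc_subset_Ico_right ht.2
  set F : ℝ → ℝ := fun t => a - b * t + d * ∫ s in (0:ℝ)..t, g s with hF_def
  have hF0 : F 0 = a := by simp [hF_def]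
  have hFder : ∀ t ∈ Ioo (0:ℝ) T, HasDerivAt F (-b + d * g t) t := by
    intro t ht
    have hmem : Ico (0:ℝ) T ∈ nhds t :=
      mem_nhds_iff.2 ⟨Ioo 0 T, Ioo_subset_Ico_self, isOpen_Ioo, ht⟩
    have h1 : HasDerivAt (fun u => ∫ s in (0:ℝ)..u, g s) (g t) t := by
      apply intervalIntegral.integral_hasDerivAt_right (hgint t ⟨ht.1.le, ht.2⟩)
      · exact ((hgcont.mono Ioo_subset_Ico_self).stronglyMeasurableAtFilter isOpen_Ioo t ht)
      · exact hgcont.continuousAt hmem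
    have h2 := ((hasDerivAt_const t a).sub ((hasDerivAt_id t).const_mul b)).add (h1.const_mul d)
    exact h2.congr_deriv (by ring)
  have hFcontIcc : ∀ u ∈ Ico (0:ℝ) T, ContinuousOn F (Icc 0 u) := by
    intro u hu
    have hint : ContinuousOn (fun t => ∫ s in (0:ℝ)..t, g s) (Icc 0 u) := by
      have h := intervalIntegral.continuousOn_primitive_interval
        (a := 0) (b := u) (μ := volume) (f := g) ?_
      · rwa [uIcc_of_le hu.1] at h
      · rw [uIcc_of_le hu.1]
        exact ((hgcont.mono (Icc_subset_Ico_right hu.2)).integrableOn_Icc)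
    exact ((continuous_const.sub (continuous_const.mul continuous_id)).continuousOn).add
      (continuousOn_const.mul hint)
  -- Step 1: F ≥ a on [0, T)
  have hFa : ∀ t ∈ Ico (0:ℝ) T, a ≤ F t := by
    intro t₁ ht₁
    by_contra hlt
    push_neg at hlt
    have ht₁pos : 0 < t₁ := by
      rcases eq_or_lt_of_le ht₁.1 with h | h
      · rw [← h, hF0] at hlt; linarith
      · exact h
    set r : ℝ := (max c (F t₁) + a) / 2 with hr_def
    have hmaxlt : max c (F t₁) < a := max_lt hcond hlt
    have hrmax : max c (F t₁) < r := by rw [hr_def]; linarith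
    have hra : r < a := by rw [hr_def]; linarith
    have hrt₁ : F t₁ < r := lt_of_le_of_lt (le_max_right _ _) hrmax
    have hcr : c < r := lt_of_le_of_lt (le_max_left _ _) hrmax
    set S := {t ∈ Icc 0 t₁ | r ≤ F t} with hS_def
    have hS0 : (0:ℝ) ∈ S := ⟨⟨le_refl 0, ht₁pos.le⟩, by rw [hF0]; exact hra.le⟩
    have hSbdd : BddAbove S := ⟨t₁, fun x hx => hx.1.2⟩
    have hSne : S.Nonempty := ⟨0, hS0⟩
    have hFc : ContinuousOn F (Icc 0 t₁) := hFcontIcc t₁ ht₁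
    have hSclosed : IsClosed S := by
      have := hFc.preimage_isClosed_of_isClosed isClosed_Icc (isClosed_Ici (a := r))
      convert this using 1
      rfl
    set s := sSup S with hs_def
    have hsS : s ∈ S := hSclosed.csSup_mem hSne hSbdd
    have hs_le : s ≤ t₁ := hsS.1.2
    have hs0 : 0 ≤ s := hsS.1.1
    have hFs : r ≤ F s := hsS.2
    have hst₁ : s < t₁ := lt_of_le_of_ne hs_le (fun h => by rw [h] at hFs; linarith)
    -- s > 0 : continuity of F at 0 gives a positive point in S
    have hspos : 0 < s := by
      have hcw : ContinuousWithinAt F (Icc 0 t₁) 0 :=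
        hFc.continuousWithinAt ⟨le_refl 0, ht₁pos.le⟩
      have hev : ∀ᶠ x in nhdsWithin 0 (Icc 0 t₁), r < F x := by
        apply hcw.eventually_const_lt
        rw [hF0]; exact hra
      rw [eventually_nhdsWithin_iff] at hev
      rw [Metric.eventually_nhds_iff] at hev
      obtain ⟨δ, hδ, hball⟩ := hev
      set t₂ := min (δ/2) t₁ with ht₂_def
      have ht₂pos : 0 < t₂ := lt_min (by linarith) ht₁pos
      have ht₂S : t₂ ∈ S := by
        refine ⟨⟨ht₂pos.le, min_le_right _ _⟩, ?_⟩
        have : r < F t₂ := by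
          apply hball ?_ ⟨ht₂pos.le, min_le_right _ _⟩
          rw [Real.dist_eq]
          rw [sub_zero, abs_of_pos ht₂pos]
          calc t₂ ≤ δ/2 := min_le_left _ _
            _ < δ := by linarith
        exact this.le
      exact lt_of_lt_of_le ht₂pos (le_csSup hSbdd ht₂S)
    have hsIoo : s ∈ Ioo (0:ℝ) T := ⟨hspos, hst₁.trans ht₁.2⟩
    have hys : F s ≤ y s := hineq s hsIoo
    have hLpos : 0 < -b + d * g s := by
      have h1 : r ^ κ ≤ g s := by
        have : r ≤ y s := hFs.trans hys
        exact Real.rpow_le_rpow (hc0.trans hcr.le) this hκ0.le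
      have h2 : c ^ κ < r ^ κ := Real.rpow_lt_rpow hc0 hcr hκ0
      rw [hcκ] at h2
      have h3 : 2 * b / d < g s := lt_of_lt_of_le h2 h1
      have h4 : 2 * b < d * g s := by
        rw [div_lt_iff₀ hd] at h3; linarith [h3]
      linarith
    -- but F decreases immediately after s, contradicting positive derivative
    have hder := (hFder s hsIoo).hasDerivWithinAt (s := Ioi s)
    rw [hasDerivWithinAt_iff_tendsto_slope] at hder
    have hdiff : Ioi s \ {s} = Ioi s := Set.diff_singleton_eq_self (by simp)
    rw [hdiff] at hder
    have h2 : ∀ᶠ t in nhdsWithin s (Ioi s), 0 < slope F s t :=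
      hder.eventually (eventually_gt_nhds hLpos)
    have h3 : ∀ᶠ t in nhdsWithin s (Ioi s), t < t₁ :=
      Filter.Eventually.filter_mono nhdsWithin_le_nhds (eventually_lt_nhds hst₁)
    have h4 : ∀ᶠ t in nhdsWithin s (Ioi s), t ∈ Ioi s := eventually_mem_nhdsWithin
    obtain ⟨t, hts, htlt, htmem⟩ := (h2.and (h3.and h4)).exists
    have hstt : s < t := htmem
    have hslope : 0 < (F t - F s) / (t - s) := by rwa [slope_def_field] at hts
    have hFts : F s < F t := by
      rcases div_pos_iff.mp hslope with ⟨h5, _⟩ | ⟨_, h6⟩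
      · linarith
      · linarith
    -- but F t < r since s < t ≤ t₁
    have hFtr : F t < r := by
      by_contra h
      push_neg at h
      have : t ∈ S := ⟨⟨hs0.trans hstt.le, htlt.le⟩, h⟩
      exact absurd (le_csSup hSbdd this) (not_le.2 hstt)
    linarith
  -- Step 2: differential inequality on F^(1-κ)
  have key : ∀ t₀ t : ℝ, 0 < t₀ → t₀ ≤ t → t < T →
      (κ-1) * (d/2) * t < a ^ (1-κ) + (κ-1) * (d/2) * t₀ := by
    intro t₀ t ht₀ ht₀t htT
    set H : ℝ → ℝ := fun u => F u ^ (1-κ) + (κ-1) * (d/2) * u with hH_def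
    have hFpos : ∀ x ∈ Ioo (0:ℝ) T, 0 < F x := fun x hx =>
      lt_of_lt_of_le ha (hFa x ⟨hx.1.le, hx.2⟩)
    have hHder : ∀ x ∈ Ioo (0:ℝ) T,
        HasDerivAt H ((-b + d * g x) * (1-κ) * F x ^ (1-κ-1) + (κ-1) * (d/2)) x := by
      intro x hx
      have h1 := (hFder x hx).rpow_const (p := 1-κ) (Or.inl (ne_of_gt (hFpos x hx)))
      have h2 := ((hasDerivAt_id x).const_mul ((κ-1) * (d/2)))
      have h3 := h1.add h2
      exact h3.congr_deriv (by ring)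
    have hsub : Icc t₀ t ⊆ Ioo 0 T := fun x hx =>
      ⟨lt_of_lt_of_le ht₀ hx.1, lt_of_le_of_lt hx.2 htT⟩
    have hant : AntitoneOn H (Icc t₀ t) := by
      apply antitoneOn_of_hasDerivWithinAt_nonpos (convex_Icc t₀ t)
        (f' := fun x => (-b + d * g x) * (1-κ) * F x ^ (1-κ-1) + (κ-1) * (d/2))
      · intro x hx
        exact (hHder x (hsub hx)).continuousAt.continuousWithinAt
      · intro x hx
        rw [interior_Icc] at hx
        exact (hHder x (hsub (Ioo_subset_Icc_self hx))).hasDerivWithinAt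
      · intro x hx
        rw [interior_Icc] at hx
        have hxIoo : x ∈ Ioo (0:ℝ) T := hsub (Ioo_subset_Icc_self hx)
        have hFx : 0 < F x := hFpos x hxIoo
        have hFxκ : 0 < F x ^ κ := Real.rpow_pos_of_pos hFx κ
        have haκ : a ^ κ ≤ F x ^ κ := Real.rpow_le_rpow ha.le (hFa x ⟨hxIoo.1.le, hxIoo.2⟩) hκ0.le
        have hcaκ : c ^ κ < a ^ κ := Real.rpow_lt_rpow hc0 hcond hκ0
        rw [hcκ] at hcaκ
        have h2b : 2 * b < d * a ^ κ := by
          rw [div_lt_iff₀ hd] at hcaκ; linarith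
        have hgF : F x ^ κ ≤ g x := Real.rpow_le_rpow hFx.le (hineq x hxIoo) hκ0.le
        have hF' : d/2 * F x ^ κ ≤ -b + d * g x := by
          have h5 : d * F x ^ κ ≤ d * g x := mul_le_mul_of_nonneg_left hgF hd.le
          have h6 : d * a ^ κ ≤ d * F x ^ κ := mul_le_mul_of_nonneg_left haκ hd.le
          nlinarith
        have hexp : F x ^ (1-κ-1) = (F x ^ κ)⁻¹ := by
          rw [show (1-κ-1 : ℝ) = -κ by ring, Real.rpow_neg hFx.le]
        rw [hexp]
        have h7 : (-b + d * g x) * (1-κ) ≤ d/2 * F x ^ κ * (1-κ) :=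
          mul_le_mul_of_nonpos_right hF' (by linarith)
        have h8 : (-b + d * g x) * (1-κ) * (F x ^ κ)⁻¹ ≤ d/2 * F x ^ κ * (1-κ) * (F x ^ κ)⁻¹ :=
          mul_le_mul_of_nonneg_right h7 (inv_nonneg.2 hFxκ.le)
        have h9 : d/2 * F x ^ κ * (1-κ) * (F x ^ κ)⁻¹ = d/2 * (1-κ) := by
          field_simp
        rw [h9] at h8
        linarith
    have hHle : H t ≤ H t₀ := hant ⟨le_refl t₀, ht₀t⟩ ⟨ht₀t, le_refl t⟩ ht₀t
    have ht₀Ioo : t₀ ∈ Ioo (0:ℝ) T := ⟨ht₀, lt_of_le_of_lt ht₀t htT⟩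
    have htIoo : t ∈ Ioo (0:ℝ) T := ⟨lt_of_lt_of_le ht₀ ht₀t, htT⟩
    have hHt₀ : F t₀ ^ (1-κ) ≤ a ^ (1-κ) :=
      Real.rpow_le_rpow_of_nonpos ha (hFa t₀ ⟨ht₀.le, ht₀Ioo.2⟩) (by linarith)
    have hFt : 0 < F t ^ (1-κ) := Real.rpow_pos_of_pos (hFpos t htIoo) _
    simp only [hH_def] at hHle
    linarith
  -- Finish
  by_contra hTB
  push_neg at hTB
  have haκ1 : 0 < a ^ (κ-1) := Real.rpow_pos_of_pos ha _
  set B := 2 / ((κ-1) * a ^ (κ-1) * d) with hB_def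
  have hden : 0 < (κ-1) * a ^ (κ-1) * d := mul_pos (mul_pos (by linarith) haκ1) hd
  have hBpos : 0 < B := div_pos two_pos hden
  have ha1κ : a ^ (1-κ) = (a ^ (κ-1))⁻¹ := by
    rw [show (1-κ : ℝ) = -(κ-1) by ring, Real.rpow_neg ha.le]
  set t := (B + T) / 2 with ht_def
  have hBt : B < t := by rw [ht_def]; linarith
  have htT : t < T := by rw [ht_def]; linarith
  have ht0 : 0 < t := lt_trans hBpos hBt
  have hBval : (κ-1) * (d/2) * B = a ^ (1-κ) := by
    rw [hB_def, ha1κ]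
    have hκ1 : κ - 1 ≠ 0 := sub_ne_zero.2 (by linarith)
    field_simp
  set δ := (κ-1) * (d/2) * t - a ^ (1-κ) with hδ_def
  have hδpos : 0 < δ := by
    rw [hδ_def, ← hBval]
    have : (κ-1) * (d/2) * B < (κ-1) * (d/2) * t := by
      apply mul_lt_mul_of_pos_left hBt
      have h1 : (0:ℝ) < κ - 1 := by linarith
      positivity
    linarith
  set t₀ := min (t/2) (δ / ((κ-1) * d)) with ht₀_def
  have ht₀pos : 0 < t₀ := lt_min (by linarith) (div_pos hδpos (mul_pos (by linarith) hd))
  have ht₀t : t₀ ≤ t := le_trans (min_le_left _ _) (by linarith)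
  have hkey := key t₀ t ht₀pos ht₀t htT
  have ht₀δ : (κ-1) * (d/2) * t₀ < δ := by
    have h1 : t₀ ≤ δ / ((κ-1) * d) := min_le_right _ _
    have h2 : (κ-1) * (d/2) * t₀ ≤ (κ-1) * (d/2) * (δ / ((κ-1) * d)) := by
      apply mul_le_mul_of_nonneg_left h1
      have h1 : (0:ℝ) < κ - 1 := by linarith
      positivity
    have h3 : (κ-1) * (d/2) * (δ / ((κ-1) * d)) = δ / 2 := by
      have hκ1 : κ - 1 ≠ 0 := sub_ne_zero.2 (by linarith)
      field_simp
    rw [h3] at h2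
    exact lt_of_le_of_lt h2 (half_lt_self hδpos)
  rw [hδ_def] at ht₀δ
  linarith
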